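/- Let X be a reflexive Banach space with a bimonotone basis satisfying a lower f-estimate with f(n) = log₂(n+1). For every n ∈ ℕ and ε > 0 there exists N(n,ε) (one may take N = n^k where k is minimal with (1+ε)^k > f(n^k)) such that for every normalized block sequence (y_k*) of X* of length N(n,ε), there exist successive subsets F₁ < ⋯ < Fₙ of [1, N(n,ε)] and λ > 0 such that, setting xᵢ* = λ ∑_{k ∈ Fᵢ} y_k*, the vector x* = ∑_{i=1}^n xᵢ* is an ℓ∞₊ⁿ-average with constant 1+ε. -/

import Mathlib

open scoped BigOperators Classical

noncomputable section

section Prelude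

variable {X : Type*} [NormedAddCommGroup X] [NormedSpace ℝ X]

/-- The vector with finitely supported coefficients `c` with respect to the sequence `e`. -/
def vecOf (e : ℕ → X) (c : ℕ →₀ ℝ) : X := c.sum fun n a => a • e n

/-- `c < d` : the supports of `c` and `d` are successive. -/
def FsuppLt (c d : ℕ →₀ ℝ) : Prop := ∀ a ∈ c.support, ∀ b ∈ d.support, a < b

/-- The Gowers–Maurey function `f(n) = log₂(n+1)`. -/
def flog (n : ℕ) : ℝ := Real.logb 2 ((n : ℝ) + 1)

/-- Support of a functional with respect to the basis `e` (via biorthogonal functionals). -/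
def fsupp (e : ℕ → X) (f : X →L[ℝ] ℝ) : Set ℕ := {n | f (e n) ≠ 0}

/-- Bimonotonicity of the basis `e`, expressed on finitely supported vectors:
projections onto intervals are contractive. -/
def Bimonotone (e : ℕ → X) : Prop :=
  ∀ (c : ℕ →₀ ℝ) (a b : ℕ), ‖vecOf e (c.filter fun n => n ∈ Finset.Icc a b)‖ ≤ ‖vecOf e c‖

/-- Lower `f`-estimate for a general function `f`. -/
def LowerEst (e : ℕ → X) (f : ℝ → ℝ) : Prop :=
  ∀ (n : ℕ) (c : Fin n → ℕ →₀ ℝ), (∀ i j : Fin n, i < j → FsuppLt (c i) (c j)) →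
    (1 / f (n : ℝ)) * ∑ i, ‖vecOf e (c i)‖ ≤ ‖∑ i, vecOf e (c i)‖

/-- Lower `f`-estimate with `f(n) = log₂(n+1)`. -/
def LowerFEst (e : ℕ → X) : Prop :=
  ∀ (n : ℕ) (c : Fin n → ℕ →₀ ℝ), (∀ i j : Fin n, i < j → FsuppLt (c i) (c j)) →
    (1 / flog n) * ∑ i, ‖vecOf e (c i)‖ ≤ ‖∑ i, vecOf e (c i)‖

/-- `Y` embeds isomorphically into `Z` (linear isomorphism onto its image). -/
def Embeds (Y Z : Type*) [NormedAddCommGroup Y] [NormedSpace ℝ Y]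
    [NormedAddCommGroup Z] [NormedSpace ℝ Z] : Prop :=
  ∃ T : Y →L[ℝ] Z, ∃ c : ℝ, 0 < c ∧ ∀ y, c * ‖y‖ ≤ ‖T y‖

/-- `Y` embeds into `Z` with constant `K` (i.e. `‖T‖ ⬝ ‖T⁻¹‖ ≤ K` after normalisation). -/
def EmbedsWithConst (K : ℝ) (Y Z : Type*) [NormedAddCommGroup Y] [NormedSpace ℝ Y]
    [NormedAddCommGroup Z] [NormedSpace ℝ Z] : Prop :=
  ∃ T : Y →L[ℝ] Z, ∀ y, ‖y‖ ≤ ‖T y‖ ∧ ‖T y‖ ≤ K * ‖y‖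

/-- The closed span `[eₙ : n ∉ S]`. -/
def spanCompl (e : ℕ → X) (S : Set ℕ) : Submodule ℝ X :=
  (Submodule.span ℝ (e '' Sᶜ)).topologicalClosure

/-- `Y` is tight in the basic sequence `e`. -/
def TightIn (e : ℕ → X) (Y : Type*) [NormedAddCommGroup Y] [NormedSpace ℝ Y] : Prop :=
  ∃ I : ℕ → Finset ℕ, (∀ i j : ℕ, i < j → ∀ a ∈ I i, ∀ b ∈ I j, a < b) ∧
    ∀ A : Set ℕ, A.Infinite → ¬ Embeds Y ↥(spanCompl e (⋃ i ∈ A, (I i : Set ℕ)))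

/-- The basis `e` is tight: every infinite-dimensional Banach space is tight in it. -/
def TightBasis (e : ℕ → X) : Prop :=
  ∀ (Y : Type) [NormedAddCommGroup Y] [NormedSpace ℝ Y] [CompleteSpace Y],
    ¬ FiniteDimensional ℝ Y → TightIn e Y

end Prelude

/-- `g` is an `ℓ∞₊ⁿ`-average with constant `C` in the dual: a normalized sum of `n`
successive finitely supported functionals each of norm at least `1/C`. -/
def IsLinftyAvgDual {X : Type} [NormedAddCommGroup X] [NormedSpace ℝ X]
    (e : ℕ → X) (n : ℕ) (C : ℝ) (g : Fin n → X →L[ℝ] ℝ) : Prop :=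
  ‖∑ i, g i‖ = 1 ∧ (∀ i, (fsupp e (g i)).Finite) ∧
  (∀ i j : Fin n, i < j → ∀ a ∈ fsupp e (g i), ∀ b ∈ fsupp e (g j), a < b) ∧
  ∀ i, 1 / C ≤ ‖g i‖
section Aux

variable {X : Type*} [NormedAddCommGroup X] [NormedSpace ℝ X]

theorem vecOf_eq_lc (e : ℕ → X) (c : ℕ →₀ ℝ) :
    vecOf e c = Finsupp.linearCombination ℝ e c :=
  (Finsupp.linearCombination_apply ℝ c).symm

theorem vecOf_add (e : ℕ → X) (c d : ℕ →₀ ℝ) :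
    vecOf e (c + d) = vecOf e c + vecOf e d := by
  simp [vecOf_eq_lc]

theorem vecOf_finsum (e : ℕ → X) {ι : Type*} (s : Finset ι) (c : ι → ℕ →₀ ℝ) :
    vecOf e (∑ i ∈ s, c i) = ∑ i ∈ s, vecOf e (c i) := by
  simp [vecOf_eq_lc]

theorem apply_vecOf (e : ℕ → X) (g : X →L[ℝ] ℝ) (c : ℕ →₀ ℝ) :
    g (vecOf e c) = ∑ m ∈ c.support, c m * g (e m) := by
  rw [vecOf, map_finsuppSum, Finsupp.sum]
  simp [g.map_smul, smul_eq_mul]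

theorem dense_range_vecOf (e : ℕ → X)
    (hdense : (Submodule.span ℝ (Set.range e)).topologicalClosure = ⊤) :
    Dense (Set.range (vecOf e)) := by
  have h1 : Set.range (vecOf e) = (Submodule.span ℝ (Set.range e) : Set X) := by
    have := Finsupp.range_linearCombination (R := ℝ) (v := e)
    rw [← this]
    ext x
    simp only [Set.mem_range, SetLike.mem_coe, LinearMap.mem_range]
    constructor
    · rintro ⟨c, rfl⟩; exact ⟨c, (vecOf_eq_lc e c).symm⟩
    · rintro ⟨c, rfl⟩; exact ⟨c, vecOf_eq_lc e c⟩
  rw [h1]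
  have : Dense ((Submodule.span ℝ (Set.range e)).topologicalClosure : Set X) := by
    rw [hdense]; exact dense_univ
  intro x
  have hx := this x
  rw [Submodule.topologicalClosure_coe] at hx
  rwa [closure_closure] at hx

/-- Bound a functional by testing on finitely supported vectors. -/
theorem opNorm_le_of_vecOf (e : ℕ → X)
    (hdense : (Submodule.span ℝ (Set.range e)).topologicalClosure = ⊤)
    (g : X →L[ℝ] ℝ) (M : ℝ) (hM : 0 ≤ M)
    (h : ∀ c : ℕ →₀ ℝ, |g (vecOf e c)| ≤ M * ‖vecOf e c‖) : ‖g‖ ≤ M := by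
  apply g.opNorm_le_bound hM
  intro x
  have hcl : IsClosed {x : X | |g x| ≤ M * ‖x‖} := by
    apply isClosed_le
    · exact continuous_abs.comp g.continuous
    · exact continuous_const.mul continuous_norm
  have : x ∈ closure (Set.range (vecOf e)) := by
    rw [(dense_range_vecOf e hdense).closure_eq]; trivial
  have hsub : Set.range (vecOf e) ⊆ {x : X | |g x| ≤ M * ‖x‖} := by
    rintro _ ⟨c, rfl⟩; exact h c
  exact closure_minimal hsub hcl this

end Aux
section Aux2

variable {X : Type*} [NormedAddCommGroup X] [NormedSpace ℝ X]

/-- If `g` kills `e m` outside the predicate `p`, then `g` only sees the `p`-part. -/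
theorem apply_vecOf_filter (e : ℕ → X) (g : X →L[ℝ] ℝ) (p : ℕ → Prop) [DecidablePred p]
    (hg : ∀ m, ¬ p m → g (e m) = 0) (c : ℕ →₀ ℝ) :
    g (vecOf e (c.filter p)) = g (vecOf e c) := by
  rw [apply_vecOf, apply_vecOf]
  rw [Finsupp.support_filter]
  rw [Finset.sum_filter]
  apply Finset.sum_congr rfl
  intro m hm
  by_cases hpm : p m
  · rw [if_pos hpm, Finsupp.filter_apply_pos _ _ hpm]
  · rw [if_neg hpm, hg m hpm, mul_zero]

/-- If `g` kills `e m` on the predicate `p`, then `g` vanishes on the `p`-part. -/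
theorem apply_vecOf_filter_zero (e : ℕ → X) (g : X →L[ℝ] ℝ) (p : ℕ → Prop) [DecidablePred p]
    (hg : ∀ m, p m → g (e m) = 0) (c : ℕ →₀ ℝ) :
    g (vecOf e (c.filter p)) = 0 := by
  rw [apply_vecOf, Finsupp.support_filter]
  apply Finset.sum_eq_zero
  intro m hm
  rw [Finset.mem_filter] at hm
  rw [hg m hm.2, mul_zero]

/-- Dual bimonotonicity: a block functional is dominated by a sum with blocks outside
its supporting interval. -/
theorem dual_block_le (e : ℕ → X)
    (hdense : (Submodule.span ℝ (Set.range e)).topologicalClosure = ⊤)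
    (hbm : Bimonotone e) (g h : X →L[ℝ] ℝ) (a b : ℕ)
    (hg : ∀ m, ¬ m ∈ Finset.Icc a b → g (e m) = 0)
    (hh : ∀ m, m ∈ Finset.Icc a b → h (e m) = 0) :
    ‖g‖ ≤ ‖g + h‖ := by
  apply opNorm_le_of_vecOf e hdense g _ (norm_nonneg _)
  intro c
  have e1 : g (vecOf e c) = (g + h) (vecOf e (c.filter (fun m => m ∈ Finset.Icc a b))) := by
    rw [ContinuousLinearMap.add_apply,
      apply_vecOf_filter_zero e h (fun m => m ∈ Finset.Icc a b) hh c, add_zero,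
      apply_vecOf_filter e g (fun m => m ∈ Finset.Icc a b) hg c]
  rw [e1]
  calc |(g + h) (vecOf e (c.filter (fun m => m ∈ Finset.Icc a b)))|
      ≤ ‖g + h‖ * ‖vecOf e (c.filter (fun m => m ∈ Finset.Icc a b))‖ := by
        exact (g + h).le_opNorm _ |>.trans_eq' (by rw [Real.norm_eq_abs])
    _ ≤ ‖g + h‖ * ‖vecOf e c‖ :=
        mul_le_mul_of_nonneg_left (hbm c a b) (norm_nonneg _)

/-- A nonzero functional has nonempty support. -/
theorem fsupp_nonempty (e : ℕ → X)
    (hdense : (Submodule.span ℝ (Set.range e)).topologicalClosure = ⊤)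
    (g : X →L[ℝ] ℝ) (hg : g ≠ 0) : (fsupp e g).Nonempty := by
  by_contra hemp
  rw [Set.not_nonempty_iff_eq_empty] at hemp
  have hz : ∀ m, g (e m) = 0 := by
    intro m
    by_contra hm
    have : m ∈ fsupp e g := hm
    rw [hemp] at this
    exact this
  have : ‖g‖ ≤ 0 := by
    apply opNorm_le_of_vecOf e hdense g 0 le_rfl
    intro c
    rw [apply_vecOf]
    simp [hz]
  exact hg (norm_le_zero_iff.mp this)

end Aux2
section Aux3

variable {X : Type*} [NormedAddCommGroup X] [NormedSpace ℝ X]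

theorem one_le_flog {N : ℕ} (hN : 0 < N) : 1 ≤ flog N := by
  have h2 : (2:ℝ) ≤ (N:ℝ) + 1 := by
    have : (1:ℝ) ≤ (N:ℝ) := by exact_mod_cast hN
    linarith
  have h3 : Real.logb 2 2 ≤ Real.logb 2 ((N:ℝ) + 1) :=
    Real.logb_le_logb_of_le (by norm_num) (by norm_num) h2
  rw [Real.logb_self_eq_one (by norm_num)] at h3
  exact h3

theorem flog_pos {N : ℕ} (hN : 0 < N) : 0 < flog N :=
  lt_of_lt_of_le one_pos (one_le_flog hN)

theorem finsupp_filter_or (c : ℕ →₀ ℝ) (p q : ℕ → Prop) [DecidablePred p] [DecidablePred q]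
    (hdisj : ∀ m, ¬ (p m ∧ q m)) :
    c.filter (fun m => p m ∨ q m) = c.filter p + c.filter q := by
  ext m
  rw [Finsupp.add_apply, Finsupp.filter_apply, Finsupp.filter_apply, Finsupp.filter_apply]
  by_cases hp : p m
  · rw [if_pos (Or.inl hp), if_pos hp, if_neg (fun hq => hdisj m ⟨hp, hq⟩), add_zero]
  · by_cases hq : q m
    · rw [if_pos (Or.inr hq), if_neg hp, if_pos hq, zero_add]
    · rw [if_neg (fun h => h.elim hp hq), if_neg hp, if_neg hq, add_zero]

theorem finsupp_filter_congr (c : ℕ →₀ ℝ) (p q : ℕ → Prop) [DecidablePred p] [DecidablePred q]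
    (h : ∀ m, p m ↔ q m) : c.filter p = c.filter q := by
  ext m
  rw [Finsupp.filter_apply, Finsupp.filter_apply]
  by_cases hp : p m
  · rw [if_pos hp, if_pos ((h m).mp hp)]
  · rw [if_neg hp, if_neg (fun hq => hp ((h m).mpr hq))]

/-- Dual upper estimate: sum of `N` successive functionals of norm at most one has
norm at most `flog N`. -/
theorem dual_upper (e : ℕ → X)
    (hdense : (Submodule.span ℝ (Set.range e)).topologicalClosure = ⊤)
    (hbm : Bimonotone e) (hlf : LowerFEst e)
    (N : ℕ) (hN : 0 < N) (g : ℕ → X →L[ℝ] ℝ)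
    (hfin : ∀ t, (fsupp e (g t)).Finite)
    (hne : ∀ t, t < N → (fsupp e (g t)).Nonempty)
    (hsucc : ∀ i j : ℕ, i < j → ∀ a ∈ fsupp e (g i), ∀ b ∈ fsupp e (g j), a < b)
    (hnorm : ∀ t, t < N → ‖g t‖ ≤ 1) :
    ‖∑ t ∈ Finset.range N, g t‖ ≤ flog N := by
  classical
  -- the right endpoints
  set u : ℕ → ℕ := fun t => if h : t < N then
      ((hfin t).toFinset.max' (by rw [Set.Finite.toFinset_nonempty]; exact hne t h)) else 0
    with hu
  set l : ℕ → ℕ := fun t => match t with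
    | 0 => 0
    | Nat.succ s => u s + 1
    with hl
  have hu_mem : ∀ t, t < N → u t ∈ fsupp e (g t) := by
    intro t ht
    rw [hu]
    simp only [dif_pos ht]
    have := (hfin t).toFinset.max'_mem (by rw [Set.Finite.toFinset_nonempty]; exact hne t ht)
    rwa [Set.Finite.mem_toFinset] at this
  have hsupp_le : ∀ t, t < N → ∀ m ∈ fsupp e (g t), m ≤ u t := by
    intro t ht m hm
    rw [hu]
    simp only [dif_pos ht]
    exact Finset.le_max' _ m ((hfin t).mem_toFinset.mpr hm)
  have hu_lt : ∀ s t, s < t → t < N → ∀ m ∈ fsupp e (g t), u s < m := by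
    intro s t hst htN m hm
    exact hsucc s t hst (u s) (hu_mem s (hst.trans htN)) m hm
  have humono : ∀ s t, s ≤ t → t < N → u s ≤ u t := by
    intro s t hst htN
    rcases eq_or_lt_of_le hst with rfl | h
    · exact le_rfl
    · exact (hu_lt s t h htN (u t) (hu_mem t htN)).le
  have hsupp_in : ∀ t, t < N → ∀ m ∈ fsupp e (g t), m ∈ Finset.Icc (l t) (u t) := by
    intro t ht m hm
    rw [Finset.mem_Icc]
    refine ⟨?_, hsupp_le t ht m hm⟩
    match t with
    | 0 => exact Nat.zero_le m
    | Nat.succ s => exact hu_lt s (s+1) (Nat.lt_succ_self s) ht m hm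
  -- partition identity
  have hpart : ∀ k, 0 < k → k ≤ N → ∀ c : ℕ →₀ ℝ,
      c.filter (fun m => m ∈ Finset.Icc 0 (u (k-1))) =
        ∑ t ∈ Finset.range k, c.filter (fun m => m ∈ Finset.Icc (l t) (u t)) := by
    intro k
    induction k with
    | zero => intro h; exact absurd h (lt_irrefl 0)
    | succ k ih =>
      intro _ hkN c
      rcases Nat.eq_zero_or_pos k with rfl | hk
      · rw [Finset.sum_range_one]
      · have hk1 : k - 1 + 1 = k := Nat.succ_pred_eq_of_pos hk
        rw [Finset.sum_range_succ, ← ih hk (le_of_lt hkN) c]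
        rw [Nat.succ_sub_one]
        have hmono : u (k-1) ≤ u k := humono (k-1) k (Nat.pred_le k) hkN
        have hsplit : c.filter (fun m => m ∈ Finset.Icc 0 (u k)) =
            c.filter (fun m => (m ∈ Finset.Icc 0 (u (k-1))) ∨ (m ∈ Finset.Icc (l k) (u k))) := by
          apply finsupp_filter_congr
          intro m
          have hlk : l k = u (k-1) + 1 := by
            conv_lhs => rw [← hk1]
          rw [Finset.mem_Icc, Finset.mem_Icc, Finset.mem_Icc, hlk]
          omega
        rw [hsplit, finsupp_filter_or]
        intro m
        have hlk : l k = u (k-1) + 1 := by conv_lhs => rw [← hk1]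
        rw [Finset.mem_Icc, Finset.mem_Icc, hlk]
        omega
  -- main estimate
  apply opNorm_le_of_vecOf e hdense _ _ (le_trans zero_le_one (one_le_flog hN))
  intro c
  have happly : (∑ t ∈ Finset.range N, g t) (vecOf e c) =
      ∑ t ∈ Finset.range N, g t (vecOf e c) := by
    rw [ContinuousLinearMap.coe_sum', Finset.sum_apply]
  rw [happly]
  have hkill : ∀ t, t < N → ∀ m, ¬ m ∈ Finset.Icc (l t) (u t) → g t (e m) = 0 := by
    intro t ht m hm
    by_contra h
    exact hm (hsupp_in t ht m h)
  calc |∑ t ∈ Finset.range N, g t (vecOf e c)|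
      ≤ ∑ t ∈ Finset.range N, |g t (vecOf e c)| := Finset.abs_sum_le_sum_abs _ _
    _ ≤ ∑ t ∈ Finset.range N, ‖vecOf e (c.filter (fun m => m ∈ Finset.Icc (l t) (u t)))‖ := by
        apply Finset.sum_le_sum
        intro t ht
        rw [Finset.mem_range] at ht
        rw [← apply_vecOf_filter e (g t) (fun m => m ∈ Finset.Icc (l t) (u t)) (hkill t ht) c]
        calc |g t (vecOf e (c.filter (fun m => m ∈ Finset.Icc (l t) (u t))))|
            ≤ ‖g t‖ * ‖vecOf e (c.filter (fun m => m ∈ Finset.Icc (l t) (u t)))‖ :=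
              (g t).le_opNorm _ |>.trans_eq' (by rw [Real.norm_eq_abs])
          _ ≤ 1 * ‖vecOf e (c.filter (fun m => m ∈ Finset.Icc (l t) (u t)))‖ :=
              mul_le_mul_of_nonneg_right (hnorm t ht) (norm_nonneg _)
          _ = ‖vecOf e (c.filter (fun m => m ∈ Finset.Icc (l t) (u t)))‖ := one_mul _
    _ ≤ flog N * ‖vecOf e c‖ := by
        have hsuccest : ∀ i j : Fin N, i < j →
            FsuppLt (c.filter (fun m => m ∈ Finset.Icc (l i.1) (u i.1)))
              (c.filter (fun m => m ∈ Finset.Icc (l j.1) (u j.1))) := by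
          intro i j hij a ha b hb
          rw [Finsupp.support_filter, Finset.mem_filter, Finset.mem_Icc] at ha hb
          have h1 : a ≤ u i.1 := ha.2.2
          have h2 : l j.1 ≤ b := hb.2.1
          have hj1 : 0 < j.1 := lt_of_le_of_lt (Nat.zero_le _) hij
          obtain ⟨j', hj'⟩ := Nat.exists_eq_succ_of_ne_zero (Nat.pos_iff_ne_zero.mp hj1)
          have hlj : l j.1 = u j' + 1 := by rw [hj']
          have hii : i.1 ≤ j' := by omega
          have := humono i.1 j' hii (by omega)
          omega
        have hest := hlf N (fun i : Fin N =>
          c.filter (fun m => m ∈ Finset.Icc (l i.1) (u i.1))) hsuccest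
        have hsum : ∑ i : Fin N, vecOf e (c.filter (fun m => m ∈ Finset.Icc (l i.1) (u i.1))) =
            vecOf e (c.filter (fun m => m ∈ Finset.Icc 0 (u (N-1)))) := by
          rw [← vecOf_finsum, hpart N hN le_rfl c]
          congr 1
          rw [← Fin.sum_univ_eq_sum_range]
        rw [hsum] at hest
        have hsum2 : ∑ t ∈ Finset.range N, ‖vecOf e (c.filter (fun m => m ∈ Finset.Icc (l t) (u t)))‖
            = ∑ i : Fin N, ‖vecOf e (c.filter (fun m => m ∈ Finset.Icc (l i.1) (u i.1)))‖ := by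
          rw [← Fin.sum_univ_eq_sum_range]
        rw [hsum2]
        have hf := flog_pos hN
        rw [div_mul_eq_mul_div, one_mul, div_le_iff₀ hf] at hest
        calc (∑ i : Fin N, ‖vecOf e (c.filter (fun m => m ∈ Finset.Icc (l i.1) (u i.1)))‖)
            ≤ ‖vecOf e (c.filter (fun m => m ∈ Finset.Icc 0 (u (N-1))))‖ * flog N := hest
          _ ≤ ‖vecOf e c‖ * flog N := mul_le_mul_of_nonneg_right (hbm c 0 (u (N-1))) hf.le
          _ = flog N * ‖vecOf e c‖ := mul_comm _ _

end Aux3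
section Aux4

variable {X : Type*} [NormedAddCommGroup X] [NormedSpace ℝ X]

theorem fsupp_smul_sum_subset (e : ℕ → X) (lam : ℝ) (F : Finset ℕ) (y : ℕ → X →L[ℝ] ℝ) :
    fsupp e (lam • ∑ t ∈ F, y t) ⊆ ⋃ t ∈ F, fsupp e (y t) := by
  intro m hm
  simp only [fsupp, Set.mem_setOf_eq, ContinuousLinearMap.smul_apply] at hm
  have hsum : (∑ t ∈ F, y t) (e m) ≠ 0 := by
    intro h
    exact hm (by rw [h, smul_zero])
  rw [ContinuousLinearMap.coe_sum', Finset.sum_apply] at hsum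
  by_contra hmem
  apply hsum
  apply Finset.sum_eq_zero
  intro t ht
  by_contra hz
  exact hmem (Set.mem_biUnion ht hz)

theorem sum_Ico_blocks {M : Type*} [AddCommMonoid M] (f : ℕ → M) (a m : ℕ) :
    ∀ n : ℕ, ∑ i ∈ Finset.range n, ∑ t ∈ Finset.Ico (a + i * m) (a + (i+1) * m), f t =
      ∑ t ∈ Finset.Ico a (a + n * m), f t := by
  intro n
  induction n with
  | zero => simp
  | succ n ih =>
    rw [Finset.sum_range_succ, ih]
    rw [Finset.sum_Ico_consecutive]
    · exact Nat.le_add_right a (n * m)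
    · have : n * m ≤ (n+1) * m := Nat.mul_le_mul_right m (Nat.le_succ n)
      omega

theorem exists_good_k (A ε : ℝ) (hA : 0 ≤ A) (hε : 0 < ε) :
    ∃ k : ℕ, 0 < k ∧ 1 + k * A < (1 + ε)^k := by
  have hr : (1:ℝ) < 1 + ε := by linarith
  have hlo := Asymptotics.isLittleO_iff.mp
    (isLittleO_coe_const_pow_of_one_lt (R := ℝ) hr) (c := 1 / (A + 2)) (by positivity)
  obtain ⟨k, hk1, hk2⟩ := (hlo.and (Filter.eventually_ge_atTop 1)).exists
  refine ⟨k, hk2, ?_⟩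
  have hk : (1:ℝ) ≤ (k:ℝ) := by exact_mod_cast hk2
  rw [Real.norm_natCast, Real.norm_eq_abs, abs_of_pos (pow_pos (by linarith) k)] at hk1
  have h2 : (A + 2) * (k:ℝ) ≤ (1 + ε)^k := by
    rw [div_mul_eq_mul_div, one_mul] at hk1
    calc (A + 2) * (k:ℝ) ≤ (A + 2) * ((1+ε)^k / (A+2)) :=
          mul_le_mul_of_nonneg_left hk1 (by linarith)
      _ = (1+ε)^k := by field_simp
  nlinarith

theorem flog_pow_le (n k : ℕ) (hn : 0 < n) :
    flog (n ^ k) ≤ 1 + k * Real.logb 2 n := by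
  have hnk : (1:ℝ) ≤ ((n:ℝ))^k := one_le_pow₀ (by exact_mod_cast hn)
  have h1 : ((n ^ k : ℕ) : ℝ) = ((n:ℝ))^k := by push_cast; ring
  rw [flog, h1]
  have h2 : ((n:ℝ))^k + 1 ≤ 2 * ((n:ℝ))^k := by linarith
  calc Real.logb 2 (((n:ℝ))^k + 1) ≤ Real.logb 2 (2 * ((n:ℝ))^k) :=
        Real.logb_le_logb_of_le (by norm_num) (by linarith) h2
    _ = Real.logb 2 2 + Real.logb 2 (((n:ℝ))^k) :=
        Real.logb_mul (by norm_num) (by positivity)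
    _ = 1 + k * Real.logb 2 n := by
        rw [Real.logb_self_eq_one (by norm_num), Real.logb_pow]

end Aux4
section Aux5

variable {X : Type*} [NormedAddCommGroup X] [NormedSpace ℝ X]

/-- Sum over a block is dominated in norm by the total sum, for successive functionals. -/
theorem block_norm_le (e : ℕ → X)
    (hdense : (Submodule.span ℝ (Set.range e)).topologicalClosure = ⊤)
    (hbm : Bimonotone e)
    (N : ℕ) (y : ℕ → X →L[ℝ] ℝ)
    (hfin : ∀ t, (fsupp e (y t)).Finite)
    (hnz : ∀ t, t < N → y t ≠ 0)
    (hsucc : ∀ i j : ℕ, i < j → ∀ a ∈ fsupp e (y i), ∀ b ∈ fsupp e (y j), a < b)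
    (a b c d : ℕ) (hab : a ≤ b) (hbc : b < c) (hcd : c ≤ d) (hdN : d ≤ N) :
    ‖∑ t ∈ Finset.Ico b c, y t‖ ≤ ‖∑ t ∈ Finset.Ico a d, y t‖ := by
  classical
  have hne : ∀ t, t < N → ((hfin t).toFinset).Nonempty := fun t ht => by
    rw [Set.Finite.toFinset_nonempty]
    exact fsupp_nonempty e hdense (y t) (hnz t ht)
  have hbN : b < N := by omega
  have hc1N : c - 1 < N := by omega
  set α := ((hfin b).toFinset).min' (hne b hbN) with hαdef
  set β := ((hfin (c-1)).toFinset).max' (hne (c-1) hc1N) with hβdef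
  have hαmem : α ∈ fsupp e (y b) := by
    have := ((hfin b).toFinset).min'_mem (hne b hbN)
    rwa [Set.Finite.mem_toFinset] at this
  have hβmem : β ∈ fsupp e (y (c-1)) := by
    have := ((hfin (c-1)).toFinset).max'_mem (hne (c-1) hc1N)
    rwa [Set.Finite.mem_toFinset] at this
  have happ : ∀ (s : Finset ℕ) (m : ℕ),
      (∑ t ∈ s, y t) (e m) = ∑ t ∈ s, y t (e m) := by
    intro s m
    rw [ContinuousLinearMap.coe_sum', Finset.sum_apply]
  have hkey : ‖∑ t ∈ Finset.Ico b c, y t‖ ≤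
      ‖(∑ t ∈ Finset.Ico b c, y t) +
        ((∑ t ∈ Finset.Ico a b, y t) + (∑ t ∈ Finset.Ico c d, y t))‖ := by
    apply dual_block_le e hdense hbm _ _ α β
    · -- middle block vanishes off [α, β]
      intro m hm
      rw [happ]
      apply Finset.sum_eq_zero
      intro t ht
      rw [Finset.mem_Ico] at ht
      by_contra hz
      have hmem : m ∈ fsupp e (y t) := hz
      apply hm
      rw [Finset.mem_Icc]
      constructor
      · rcases eq_or_lt_of_le ht.1 with heq | hlt
        · apply Finset.min'_le
          rw [Set.Finite.mem_toFinset]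
          rw [heq]
          exact hmem
        · exact (hsucc b t hlt α hαmem m hmem).le
      · rcases eq_or_lt_of_le (Nat.le_sub_one_of_lt ht.2) with heq | hlt
        · apply Finset.le_max'
          rw [Set.Finite.mem_toFinset]
          rw [← heq]
          exact hmem
        · exact (hsucc t (c-1) hlt m hmem β hβmem).le
    · -- outer blocks vanish on [α, β]
      intro m hm
      rw [Finset.mem_Icc] at hm
      rw [ContinuousLinearMap.add_apply, happ, happ]
      rw [Finset.sum_eq_zero, Finset.sum_eq_zero, add_zero]
      · intro t ht
        rw [Finset.mem_Ico] at ht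
        by_contra hz
        have hmem : m ∈ fsupp e (y t) := hz
        have : β < m := hsucc (c-1) t (by omega) β hβmem m hmem
        omega
      · intro t ht
        rw [Finset.mem_Ico] at ht
        by_contra hz
        have hmem : m ∈ fsupp e (y t) := hz
        have : m < α := hsucc t b ht.2 m hmem α hαmem
        omega
  calc ‖∑ t ∈ Finset.Ico b c, y t‖
      ≤ ‖(∑ t ∈ Finset.Ico b c, y t) +
          ((∑ t ∈ Finset.Ico a b, y t) + (∑ t ∈ Finset.Ico c d, y t))‖ := hkey
    _ = ‖∑ t ∈ Finset.Ico a d, y t‖ := by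
        congr 1
        have h1 : (∑ t ∈ Finset.Ico a b, y t) + (∑ t ∈ Finset.Ico b c, y t) =
            ∑ t ∈ Finset.Ico a c, y t := Finset.sum_Ico_consecutive _ hab hbc.le
        have h2 : (∑ t ∈ Finset.Ico a c, y t) + (∑ t ∈ Finset.Ico c d, y t) =
            ∑ t ∈ Finset.Ico a d, y t :=
          Finset.sum_Ico_consecutive _ (hab.trans hbc.le) hcd
        rw [← h2, ← h1]
        abel

end Aux5
section Aux6

variable {X : Type} [NormedAddCommGroup X] [NormedSpace ℝ X]

theorem main_claim (e : ℕ → X)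
    (hdense : (Submodule.span ℝ (Set.range e)).topologicalClosure = ⊤)
    (hbm : Bimonotone e)
    (n : ℕ) (hn : 0 < n) (ε : ℝ) (hε : 0 < ε)
    (N : ℕ) (y : ℕ → X →L[ℝ] ℝ)
    (hfin : ∀ t, (fsupp e (y t)).Finite)
    (hsucc : ∀ i j : ℕ, i < j → ∀ a ∈ fsupp e (y i), ∀ b ∈ fsupp e (y j), a < b)
    (hnorm : ∀ t, t < N → ‖y t‖ = 1) :
    ∀ (k a : ℕ), a + n ^ k ≤ N →
      (∃ F : Fin n → Finset ℕ,
        (∀ i, (F i).Nonempty) ∧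
        (∀ i, F i ⊆ Finset.Ico a (a + n ^ k)) ∧
        (∀ i j : Fin n, i < j → ∀ s ∈ F i, ∀ t ∈ F j, s < t) ∧
        ∃ lam : ℝ, 0 < lam ∧
          IsLinftyAvgDual e n (1 + ε) (fun i => lam • ∑ t ∈ F i, y t)) ∨
      (1 + ε)^k ≤ ‖∑ t ∈ Finset.Ico a (a + n ^ k), y t‖ := by
  have hnz : ∀ t, t < N → y t ≠ 0 := by
    intro t ht h0
    have := hnorm t ht
    rw [h0, norm_zero] at this
    exact zero_ne_one this
  intro k
  induction k with
  | zero =>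
    intro a ha
    right
    simp only [pow_zero] at ha ⊢
    rw [Nat.Ico_succ_singleton, Finset.sum_singleton]
    rw [hnorm a (by omega)]
  | succ k ih =>
    intro a ha
    have hm : 0 < n ^ k := Nat.pow_pos hn
    have hexp : n ^ (k+1) = n * n ^ k := by rw [pow_succ]; ring
    have hblock : ∀ j : Fin n, (a + j.1 * n ^ k) + n ^ k ≤ N := by
      intro j
      have h1 : (j.1 + 1) * n ^ k ≤ n * n ^ k := Nat.mul_le_mul_right _ j.2
      have h3 : (j.1 + 1) * n ^ k = j.1 * n ^ k + n ^ k := by ring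
      omega
    -- apply the inductive hypothesis to each block
    by_cases hleft : ∃ j : Fin n, ∃ F : Fin n → Finset ℕ,
        (∀ i, (F i).Nonempty) ∧
        (∀ i, F i ⊆ Finset.Ico (a + j.1 * n ^ k) ((a + j.1 * n ^ k) + n ^ k)) ∧
        (∀ i j' : Fin n, i < j' → ∀ s ∈ F i, ∀ t ∈ F j', s < t) ∧
        ∃ lam : ℝ, 0 < lam ∧
          IsLinftyAvgDual e n (1 + ε) (fun i => lam • ∑ t ∈ F i, y t)
    · obtain ⟨j, F, h1, h2, h3, h4⟩ := hleft
      left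
      refine ⟨F, h1, ?_, h3, h4⟩
      intro i
      refine (h2 i).trans ?_
      apply Finset.Ico_subset_Ico
      · omega
      · have h1 := hblock j
        have h2 : (j.1 + 1) * n ^ k ≤ n * n ^ k := Nat.mul_le_mul_right _ j.2
        have h3 : (j.1 + 1) * n ^ k = j.1 * n ^ k + n ^ k := by ring
        omega
    · -- all blocks satisfy the right alternative
      push_neg at hleft
      have hSj : ∀ j : Fin n, (1 + ε)^k ≤
          ‖∑ t ∈ Finset.Ico (a + j.1 * n ^ k) ((a + j.1 * n ^ k) + n ^ k), y t‖ := by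
        intro j
        rcases ih (a + j.1 * n ^ k) (hblock j) with hl | hr
        · obtain ⟨F, h1, h2, h3, lam, hlam0, hlam1⟩ := hl
          exact absurd hlam1 (hleft j F h1 h2 h3 lam hlam0)
        · exact hr
      set T := ∑ t ∈ Finset.Ico a (a + n ^ (k+1)), y t with hT
      have hsum_blocks : ∀ j : Fin n,
          (a + j.1 * n ^ k) + n ^ k = a + (j.1 + 1) * n ^ k := by intro j; ring
      have hST : ∀ j : Fin n,
          ‖∑ t ∈ Finset.Ico (a + j.1 * n ^ k) ((a + j.1 * n ^ k) + n ^ k), y t‖ ≤ ‖T‖ := by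
        intro j
        rw [hT]
        have hnk1 : a + n ^ (k+1) = a + n * n ^ k := by rw [pow_succ]; ring
        rw [hnk1]
        apply block_norm_le e hdense hbm N y hfin hnz hsucc
        · exact Nat.le_add_right a _
        · omega
        · have h1 : (j.1 + 1) * n ^ k ≤ n * n ^ k := Nat.mul_le_mul_right _ j.2
          have h3 : (j.1 + 1) * n ^ k = j.1 * n ^ k + n ^ k := by ring
          omega
        · omega
      have hTpos : 0 < ‖T‖ := by
        have h0 : (0:ℝ) < (1+ε)^k := pow_pos (by linarith) k
        have := (hSj ⟨0, hn⟩).trans (hST ⟨0, hn⟩)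
        linarith
      by_cases hcase : ∀ j : Fin n, ‖T‖ ≤ (1 + ε) *
          ‖∑ t ∈ Finset.Ico (a + j.1 * n ^ k) ((a + j.1 * n ^ k) + n ^ k), y t‖
      · -- build the average
        left
        refine ⟨fun j => Finset.Ico (a + j.1 * n ^ k) ((a + j.1 * n ^ k) + n ^ k),
          ?_, ?_, ?_, 1 / ‖T‖, by positivity, ?_, ?_, ?_, ?_⟩
        · intro i
          rw [Finset.nonempty_Ico]
          omega
        · intro i
          apply Finset.Ico_subset_Ico
          · omega
          · have h1 := hblock i
            have h2 : (i.1 + 1) * n ^ k ≤ n * n ^ k := Nat.mul_le_mul_right _ i.2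
            have h3 : (i.1 + 1) * n ^ k = i.1 * n ^ k + n ^ k := by ring
            omega
        · intro i j hij s hs t ht
          rw [Finset.mem_Ico] at hs ht
          have h1 : (i.1 + 1) * n ^ k ≤ j.1 * n ^ k := Nat.mul_le_mul_right _ hij
          have h3 : (i.1 + 1) * n ^ k = i.1 * n ^ k + n ^ k := by ring
          omega
        · -- norm one
          have hsum : ∑ i : Fin n, (1 / ‖T‖) • ∑ t ∈ Finset.Ico (a + i.1 * n ^ k)
              ((a + i.1 * n ^ k) + n ^ k), y t = (1 / ‖T‖) • T := by
            rw [← Finset.smul_sum]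
            congr 1
            rw [hT]
            have h5 := sum_Ico_blocks y a (n ^ k) n
            rw [← Fin.sum_univ_eq_sum_range] at h5
            calc ∑ i : Fin n, ∑ t ∈ Finset.Ico (a + i.1 * n ^ k)
                  ((a + i.1 * n ^ k) + n ^ k), y t
                = ∑ i : Fin n, ∑ t ∈ Finset.Ico (a + i.1 * n ^ k)
                  (a + (i.1 + 1) * n ^ k), y t := by
                  apply Finset.sum_congr rfl
                  intro i _
                  rw [hsum_blocks i]
              _ = ∑ t ∈ Finset.Ico a (a + n * n ^ k), y t := h5
              _ = ∑ t ∈ Finset.Ico a (a + n ^ (k+1)), y t := by rw [hexp]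
          rw [hsum, _root_.norm_smul (1 / ‖T‖) T, norm_div, norm_one, Real.norm_eq_abs,
            abs_of_pos hTpos]
          field_simp
        · -- finite supports
          intro i
          apply Set.Finite.subset (Set.Finite.biUnion (Finset.Ico (a + i.1 * n ^ k)
            ((a + i.1 * n ^ k) + n ^ k)).finite_toSet (fun t _ => hfin t))
          exact fsupp_smul_sum_subset e _ _ y
        · -- successive supports
          intro i j hij p hp q hq
          have hp' := fsupp_smul_sum_subset e _ _ y hp
          have hq' := fsupp_smul_sum_subset e _ _ y hq
          rw [Set.mem_iUnion₂] at hp' hq'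
          obtain ⟨s, hs, hps⟩ := hp'
          obtain ⟨t, ht, hqt⟩ := hq'
          rw [Finset.mem_Ico] at hs ht
          have hst : s < t := by
            have h1 : (i.1 + 1) * n ^ k ≤ j.1 * n ^ k := Nat.mul_le_mul_right _ hij
            have h3 : (i.1 + 1) * n ^ k = i.1 * n ^ k + n ^ k := by ring
            omega
          exact hsucc s t hst p hps q hqt
        · -- norm lower bounds
          intro i
          show 1 / (1 + ε) ≤ ‖(1 / ‖T‖) • ∑ t ∈ Finset.Ico (a + i.1 * n ^ k)
            ((a + i.1 * n ^ k) + n ^ k), y t‖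
          rw [_root_.norm_smul (1 / ‖T‖) (∑ t ∈ Finset.Ico (a + i.1 * n ^ k)
            ((a + i.1 * n ^ k) + n ^ k), y t), norm_div, norm_one, Real.norm_eq_abs,
            abs_of_pos hTpos]
          rw [div_mul_eq_mul_div, one_mul, div_le_div_iff₀ (by linarith) hTpos]
          calc 1 * ‖T‖ = ‖T‖ := one_mul _
            _ ≤ (1 + ε) * ‖∑ t ∈ Finset.Ico (a + i.1 * n ^ k)
                ((a + i.1 * n ^ k) + n ^ k), y t‖ := hcase i
            _ = ‖∑ t ∈ Finset.Ico (a + i.1 * n ^ k)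
                ((a + i.1 * n ^ k) + n ^ k), y t‖ * (1 + ε) := mul_comm _ _
      · push_neg at hcase
        obtain ⟨j, hj⟩ := hcase
        right
        calc (1 + ε)^(k+1) = (1 + ε) * (1 + ε)^k := by rw [pow_succ]; ring
          _ ≤ (1 + ε) * ‖∑ t ∈ Finset.Ico (a + j.1 * n ^ k)
              ((a + j.1 * n ^ k) + n ^ k), y t‖ :=
            mul_le_mul_of_nonneg_left (hSj j) (by linarith)
          _ ≤ ‖T‖ := hj.le

end Aux6
/-- existence of `ℓ∞₊ⁿ`-averages in the span of any long enough
normalized block sequence of the dual. -/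
theorem stmt1 {X : Type} [NormedAddCommGroup X] [NormedSpace ℝ X] [CompleteSpace X]
    (e : ℕ → X)
    (hdense : (Submodule.span ℝ (Set.range e)).topologicalClosure = ⊤)
    (hrefl : Function.Surjective (NormedSpace.inclusionInDoubleDual ℝ X))
    (hbm : Bimonotone e) (hlf : LowerFEst e)
    (n : ℕ) (hn : 0 < n) (ε : ℝ) (hε : 0 < ε) :
    ∃ N : ℕ, 0 < N ∧
      ∀ y : Fin N → X →L[ℝ] ℝ, (∀ k, ‖y k‖ = 1) → (∀ k, (fsupp e (y k)).Finite) →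
        (∀ k l : Fin N, k < l → ∀ a ∈ fsupp e (y k), ∀ b ∈ fsupp e (y l), a < b) →
        ∃ F : Fin n → Finset (Fin N), (∀ i, (F i).Nonempty) ∧
          (∀ i j : Fin n, i < j → ∀ a ∈ F i, ∀ b ∈ F j, a < b) ∧
          ∃ lam : ℝ, 0 < lam ∧
            IsLinftyAvgDual e n (1 + ε) (fun i => lam • ∑ k ∈ F i, y k) := by
  classical
  have hA : 0 ≤ Real.logb 2 n := Real.logb_nonneg (by norm_num) (by exact_mod_cast hn)
  obtain ⟨k, hk0, hk⟩ := exists_good_k (Real.logb 2 n) ε hA hε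
  have hNpos : 0 < n ^ k := Nat.pow_pos hn
  refine ⟨n ^ k, hNpos, ?_⟩
  intro y hy1 hy2 hy3
  set y' : ℕ → X →L[ℝ] ℝ := fun t => if h : t < (n ^ k) then y ⟨t, h⟩ else 0 with hy'
  have hy'lt : ∀ t (h : t < (n ^ k)), y' t = y ⟨t, h⟩ := fun t h => dif_pos h
  have hy'ge : ∀ t, ¬ t < (n ^ k) → y' t = 0 := fun t h => dif_neg h
  have hfsupp0 : fsupp e (0 : X →L[ℝ] ℝ) = ∅ := by
    ext m; simp [fsupp]
  have hfin' : ∀ t, (fsupp e (y' t)).Finite := by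
    intro t
    by_cases h : t < (n ^ k)
    · rw [hy'lt t h]; exact hy2 _
    · rw [hy'ge t h, hfsupp0]; exact Set.finite_empty
  have hsucc' : ∀ i j : ℕ, i < j → ∀ a ∈ fsupp e (y' i), ∀ b ∈ fsupp e (y' j), a < b := by
    intro i j hij a ha b hb
    by_cases hjN : j < (n ^ k)
    · have hiN : i < (n ^ k) := hij.trans hjN
      rw [hy'lt i hiN] at ha
      rw [hy'lt j hjN] at hb
      exact hy3 ⟨i, hiN⟩ ⟨j, hjN⟩ hij a ha b hb
    · rw [hy'ge j hjN, hfsupp0] at hb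
      exact absurd hb (Set.notMem_empty b)
  have hnorm' : ∀ t, t < (n ^ k) → ‖y' t‖ = 1 := fun t h => by rw [hy'lt t h]; exact hy1 _
  rcases main_claim e hdense hbm n hn ε hε (n ^ k) y' hfin' hsucc' hnorm' k 0 (by omega)
    with hL | hR
  · obtain ⟨F, h1, h2, h3, lam, hlam, havg⟩ := hL
    have hFN : ∀ i, ∀ m ∈ F i, m < (n ^ k) := by
      intro i m hm
      have := h2 i hm
      rw [Finset.mem_Ico] at this
      omega
    refine ⟨fun i => (F i).attachFin (hFN i), ?_, ?_, lam, hlam, ?_⟩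
    · intro i
      obtain ⟨m, hm⟩ := h1 i
      exact ⟨⟨m, hFN i m hm⟩, (Finset.mem_attachFin _).mpr hm⟩
    · intro i j hij a ha b hb
      rw [Finset.mem_attachFin] at ha hb
      exact h3 i j hij a.1 ha b.1 hb
    · have hsame : (fun i => lam • ∑ k ∈ (F i).attachFin (hFN i), y k) =
          (fun i => lam • ∑ t ∈ F i, y' t) := by
        funext i
        congr 1
        refine Finset.sum_bij (fun (a : Fin (n ^ k)) _ => a.1) ?_ ?_ ?_ ?_
        · intro a ha
          rwa [Finset.mem_attachFin] at ha
        · intro a ha b hb hab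
          exact Fin.val_injective hab
        · intro b hb
          exact ⟨⟨b, hFN i b hb⟩, (Finset.mem_attachFin _).mpr hb, rfl⟩
        · intro a ha
          rw [hy'lt a.1 a.2]
      rw [hsame]
      exact havg
  · exfalso
    have hne' : ∀ t, t < (n ^ k) → (fsupp e (y' t)).Nonempty := by
      intro t ht
      apply fsupp_nonempty e hdense (y' t)
      intro h0
      have := hnorm' t ht
      rw [h0, norm_zero] at this
      exact zero_ne_one this
    have hupper := dual_upper e hdense hbm hlf (n ^ k) hNpos y' hfin' hne' hsucc'
      (fun t ht => (hnorm' t ht).le)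
    have hR' : (1 + ε)^k ≤ ‖∑ t ∈ Finset.range (n ^ k), y' t‖ := by
      rw [Finset.range_eq_Ico]
      have h0N : (0 : ℕ) + n ^ k = (n ^ k) := by omega
      rwa [h0N] at hR
    have hflog : flog (n ^ k) < (1 + ε)^k := by
      calc flog (n ^ k) ≤ 1 + k * Real.logb 2 n := flog_pow_le n k hn
        _ < (1 + ε)^k := hk
    linarith
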